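/- Let A be a saturated class of morphisms of simplicial sets satisfying 3-for-2 for monomorphisms. If A contains all spine inclusions sp_n : Sp_n → Δ[n] for n ≥ 2 and contains the left cone inclusion c_2 : C_2 → Δ[2], then A contains all left cone inclusions c_n : C_n → Δ[n] for n ≥ 2. -/

import Mathlib

open CategoryTheory CategoryTheory.GrothendieckTopology CategoryTheory.Limits Simplicial SSet Opposite

noncomputable section

namespace BousfieldPaper

/-! ## Basic lifting-property classes of simplicial sets -/

/-- A Kan fibration: a map with the right lifting property against all horn inclusions. -/
def KanFibration {S T : SSet.{0}} (p : S ⟶ T) : Prop :=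
  ∀ (n : ℕ) (i : Fin (n + 2)), HasLiftingProperty (Λ[n + 1, i].ι) p

/-- An acyclic (trivial) Kan fibration: a map with the right lifting property against
all boundary inclusions. -/
def TrivialKanFibration {S T : SSet.{0}} (p : S ⟶ T) : Prop :=
  ∀ n : ℕ, HasLiftingProperty (∂Δ[n].ι) p

/-- The class of maps with the right lifting property against every map in `T`. -/
def rlpOf {C : Type*} [Category C] (T : MorphismProperty C) : MorphismProperty C :=
  fun _ _ p => ∀ ⦃A B : C⦄ (i : A ⟶ B), T i → HasLiftingProperty i p

/-- The class of maps with the left lifting property against every map in `T`. -/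
def llpOf {C : Type*} [Category C] (T : MorphismProperty C) : MorphismProperty C :=
  fun _ _ i => ∀ ⦃S T' : C⦄ (p : S ⟶ T'), T p → HasLiftingProperty i p

/-- The saturation `llp(rlp(S))` of a class of maps. -/
def saturationOf {C : Type*} [Category C] (S : MorphismProperty C) : MorphismProperty C :=
  llpOf (rlpOf S)

/-- The class of all horn inclusions (up to isomorphism of arrows). -/
def HornClass : MorphismProperty SSet.{0} := fun _ _ f =>
  ∃ (n : ℕ) (i : Fin (n + 2)), Nonempty (Arrow.mk f ≅ Arrow.mk (Λ[n + 1, i].ι))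

/-- The class of left horn inclusions `Λ[n,0] → Δ[n]`, `n ≥ 2` (up to isomorphism of arrows). -/
def LeftHornClass : MorphismProperty SSet.{0} := fun _ _ f =>
  ∃ n : ℕ, 2 ≤ n ∧ Nonempty (Arrow.mk f ≅ Arrow.mk (Λ[n, 0].ι))

/-- Anodyne maps: the saturation of the class of horn inclusions. -/
def Anodyne : MorphismProperty SSet.{0} := saturationOf HornClass

/-- A weak homotopy equivalence of simplicial sets (in the Kan--Quillen sense):
a map admitting a factorization as an anodyne map followed by an acyclic Kan fibration. -/
def WeakHomotopyEquivalence {S T : SSet.{0}} (f : S ⟶ T) : Prop :=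
  ∃ (Z : SSet.{0}) (i : S ⟶ Z) (p : Z ⟶ T),
    Anodyne i ∧ TrivialKanFibration p ∧ i ≫ p = f

/-! ## Saturated classes -/

/-- `f` is a retract of `g` in the arrow category. -/
def IsRetractOf {C : Type*} [Category C] {X Y X' Y' : C} (f : X ⟶ Y) (g : X' ⟶ Y') : Prop :=
  ∃ (i : Arrow.mk f ⟶ Arrow.mk g) (r : Arrow.mk g ⟶ Arrow.mk f), i ≫ r = 𝟙 _

/-- The inclusion functor of the subposet `{x | x < j}` of `J`. -/
def iioFunctor {J : Type} [Preorder J] (j : J) : Set.Iio j ⥤ J :=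
  Monotone.functor (f := fun x => (x : J)) (fun _ _ h => h)

/-- The cocone on the restriction of `F : J ⥤ C` to `{x | x < j}` with apex `F.obj j`. -/
def coconeBelow {J : Type} [Preorder J] {C : Type*} [Category C]
    (F : J ⥤ C) (j : J) : Cocone (iioFunctor j ⋙ F) where
  pt := F.obj j
  ι :=
    { app := fun x => F.map (homOfLE (le_of_lt x.2))
      naturality := fun x y g => by
        dsimp [iioFunctor, Monotone.functor]
        rw [← F.map_comp, Category.comp_id]
        congr 1 }

/-- A class of morphisms of simplicial sets is *saturated* (weakly saturated) if it is closed
under pushouts (cobase change), retracts and transfinite compositions. -/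
structure IsSaturated (A : MorphismProperty SSet.{0}) : Prop where
  pushout : ∀ ⦃X Y X' Y' : SSet.{0}⦄ (f : X ⟶ Y) (u : X ⟶ X') (v : Y ⟶ Y') (f' : X' ⟶ Y'),
    IsPushout f u v f' → A f → A f'
  retract : ∀ ⦃X Y X' Y' : SSet.{0}⦄ (f : X ⟶ Y) (g : X' ⟶ Y'),
    IsRetractOf f g → A g → A f
  transfinite : ∀ (J : Type) (_ : LinearOrder J) (_ : SuccOrder J) (_ : OrderBot J)
    (_ : WellFoundedLT J) (F : J ⥤ SSet.{0}) (c : Cocone F) (_ : IsColimit c),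
    (∀ j : J, ¬IsMax j → A (F.map (homOfLE (Order.le_succ j)))) →
    (∀ j : J, Order.IsSuccLimit j → Nonempty (IsColimit (coconeBelow F j))) →
    A (c.ι.app ⊥)

/-- Right cancellation property for monomorphisms. -/
def RightCancel (A : MorphismProperty SSet.{0}) : Prop :=
  ∀ ⦃X Y Z : SSet.{0}⦄ (u : X ⟶ Y) (v : Y ⟶ Z),
    Mono u → Mono v → A (u ≫ v) → A u → A v

/-- Left cancellation property for monomorphisms. -/
def LeftCancel (A : MorphismProperty SSet.{0}) : Prop :=
  ∀ ⦃X Y Z : SSet.{0}⦄ (u : X ⟶ Y) (v : Y ⟶ Z),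
    Mono u → Mono v → A (u ≫ v) → A v → A u

/-- 3-for-2 for monomorphisms: both left and right cancellation. -/
def ThreeForTwo (A : MorphismProperty SSet.{0}) : Prop :=
  RightCancel A ∧ LeftCancel A

/-! ## The left cone, the spine, and related subcomplexes of the standard simplex -/

/-- The left cone `C n ⊆ Δ[n]`: the union of the images of the initial edges `0 → i`. -/
def coneSub (n : ℕ) : Subfunctor Δ[n] where
  obj m := {α | ∃ i : ℕ, 1 ≤ i ∧ i ≤ n ∧
    ∀ j, (stdSimplex.asOrderHom α j : ℕ) = 0 ∨ (stdSimplex.asOrderHom α j : ℕ) = i}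
  map := by
    rintro m m' g α ⟨i, hi1, hin, h⟩
    exact ⟨i, hi1, hin, fun j => h _⟩

/-- The spine `Sp n ⊆ Δ[n]`: the union of the images of the edges `i → i+1`. -/
def spineSub (n : ℕ) : Subfunctor Δ[n] where
  obj m := {α | ∃ i : ℕ, i + 1 ≤ n ∧
    ∀ j, (stdSimplex.asOrderHom α j : ℕ) = i ∨ (stdSimplex.asOrderHom α j : ℕ) = i + 1}
  map := by
    rintro m m' g α ⟨i, hi, h⟩
    exact ⟨i, hi, fun j => h _⟩

/-- The union `(SpC) n ⊆ Δ[n]` of the images of the `2`-simplices `{0, i, i+1}`, `0 < i < n`. -/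
def spcSub (n : ℕ) : Subfunctor Δ[n] where
  obj m := {α | ∃ i : ℕ, 0 < i ∧ i + 1 ≤ n ∧
    ∀ j, (stdSimplex.asOrderHom α j : ℕ) = 0 ∨ (stdSimplex.asOrderHom α j : ℕ) = i ∨ (stdSimplex.asOrderHom α j : ℕ) = i + 1}
  map := by
    rintro m m' g α ⟨i, h₀, h₁, h⟩
    exact ⟨i, h₀, h₁, fun j => h _⟩

/-- The canonical inclusion `k n : C n → Λ[n, 0]` of the left cone into the left horn. -/
def coneToHorn (n : ℕ) (hn : 2 ≤ n) : ((coneSub n).toFunctor : SSet.{0}) ⟶ Λ[n, 0] where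
  app m := TypeCat.ofHom fun α => by
    refine ⟨α.1, ?_⟩
    obtain ⟨i, hi1, hin, h⟩ := α.2
    intro hu
    rw [Set.eq_univ_iff_forall] at hu
    obtain ⟨kv, hkv0, hkvi, hkvlt⟩ : ∃ kv : ℕ, kv ≠ 0 ∧ kv ≠ i ∧ kv < n + 1 := by
      rcases eq_or_ne i 1 with hc | hc
      · exact ⟨2, by omega, by omega, by omega⟩
      · exact ⟨1, by omega, by omega, by omega⟩
    rcases hu ⟨kv, hkvlt⟩ with hr | h0
    · obtain ⟨j, hj⟩ := hr
      have hval := congrArg Fin.val hj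
      rcases h j with h' | h' <;> simp_all
    · have := congrArg Fin.val (Set.mem_singleton_iff.1 h0)
      simp_all

/-- The nerve `IΔ^n` of the free groupoid (codiscrete groupoid) on `{0, …, n}`:
its `m`-simplices are all (not necessarily monotone) functions `Fin (m+1) → Fin (n+1)`. -/
def IDelta (n : ℕ) : SSet.{0} where
  obj m := Fin (m.unop.len + 1) → Fin (n + 1)
  map f := TypeCat.ofHom fun α => α ∘ f.unop.toOrderHom

/-- The canonical inclusion `Δ[n] → IΔ^n`. -/
def iDeltaIncl (n : ℕ) : (Δ[n] : SSet.{0}) ⟶ IDelta n where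
  app m := TypeCat.ofHom fun α => ⇑(stdSimplex.asOrderHom α)

/-- The vertex `k : Δ[0] → IΔ^n`. -/
def iDeltaVertex (n : ℕ) (k : Fin (n + 1)) : (Δ[0] : SSet.{0}) ⟶ IDelta n where
  app m := TypeCat.ofHom fun _ => fun _ => k


/-! ## Bisimplicial sets, the box product and the slash construction -/

/-- Bisimplicial sets: presheaves of sets on `Δ × Δ`. -/
abbrev BSSet : Type 1 := (SimplexCategory × SimplexCategory)ᵒᵖ ⥤ Type

/-- The box product `A □ B` of two simplicial sets: `(A □ B)_{n,m} = A_n × B_m`. -/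
def box (A B : SSet.{0}) : BSSet where
  obj nm := A.obj (op nm.unop.1) × B.obj (op nm.unop.2)
  map f := TypeCat.ofHom fun p => ⟨A.map f.unop.1.op p.1, B.map f.unop.2.op p.2⟩

/-- The box product, functorially in its second variable. -/
def boxFunctor (A : SSet.{0}) : SSet.{0} ⥤ BSSet where
  obj B := box A B
  map g :=
    { app := fun nm => TypeCat.ofHom fun p => ⟨p.1, g.app _ p.2⟩
      naturality := fun nm nm' f => by
        ext p
        exact congrArg (Prod.mk (A.map f.unop.1.op p.1)) (NatTrans.naturality_apply g f.unop.2.op p.2) }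

/-- The box product is natural in its first variable. -/
def boxHomLeft {A A' : SSet.{0}} (f : A ⟶ A') (B : SSet.{0}) :
    (boxFunctor A).obj B ⟶ (boxFunctor A').obj B where
  app nm := TypeCat.ofHom fun p => ⟨f.app _ p.1, p.2⟩
  naturality nm nm' g := by
    ext p
    exact congrArg (fun a => Prod.mk a (B.map g.unop.2.op p.2)) (NatTrans.naturality_apply f g.unop.1.op p.1)

lemma boxHomLeft_natural {A A' : SSet.{0}} (f : A ⟶ A') {B B' : SSet.{0}} (g : B ⟶ B') :
    (boxFunctor A).map g ≫ boxHomLeft f B' = boxHomLeft f B ≫ (boxFunctor A').map g := rfl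

/-- The simplicial set `A \ X` with `m`-simplices the bisimplicial maps `A □ Δ[m] → X`. -/
def slash (A : SSet.{0}) (X : BSSet) : SSet.{0} :=
  SSet.stdSimplex.op ⋙ ((boxFunctor A).op ⋙ yoneda.obj X)

/-- Functoriality (contravariance) of `A \ X` in `A`. -/
def slashMap {A A' : SSet.{0}} (f : A ⟶ A') (X : BSSet) : slash A' X ⟶ slash A X :=
  Functor.whiskerLeft SSet.stdSimplex.op
    (Functor.whiskerRight (NatTrans.op
      { app := fun B => boxHomLeft f B
        naturality := fun _ _ g => (boxHomLeft_natural f g).symm }) (yoneda.obj X))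

lemma slashMap_id (A : SSet.{0}) (X : BSSet) : slashMap (𝟙 A) X = 𝟙 (slash A X) := rfl

lemma slashMap_comp {A A' A'' : SSet.{0}} (f : A ⟶ A') (g : A' ⟶ A'') (X : BSSet) :
    slashMap (f ≫ g) X = slashMap g X ≫ slashMap f X := rfl


/-! ## Columns, Reedy fibrancy, Segal and Bousfield maps -/

/-- The `n`-th column `X_n := Δ[n] \ X` of a bisimplicial set. -/
def col (n : ℕ) (X : BSSet) : SSet.{0} := slash Δ[n] X

/-- The face map `d_i : X_{n+1} → X_n` between columns. -/
def colδ {n : ℕ} (i : Fin (n + 2)) (X : BSSet) : col (n + 1) X ⟶ col n X :=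
  slashMap (SSet.stdSimplex.map (SimplexCategory.δ i)) X

/-- The degeneracy map `s_i : X_n → X_{n+1}` between columns. -/
def colσ {n : ℕ} (i : Fin (n + 1)) (X : BSSet) : col n X ⟶ col (n + 1) X :=
  slashMap (SSet.stdSimplex.map (SimplexCategory.σ i)) X

/-- A bisimplicial set is `v`-fibrant (Reedy fibrant) if `f \ X` is a Kan fibration for
every monomorphism `f` of simplicial sets. -/
def VFibrant (X : BSSet) : Prop :=
  ∀ ⦃A B : SSet.{0}⦄ (f : A ⟶ B), Mono f → KanFibration (slashMap f X)

/-- The `n`-th Bousfield map `β_n = c_n \ X : X_n → C_n \ X`. -/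
def bousfieldMap (n : ℕ) (X : BSSet) : col n X ⟶ slash (coneSub n).toFunctor X :=
  slashMap (coneSub n).ι X

/-- The `n`-th Segal map `ξ_n = sp_n \ X : X_n → Sp_n \ X`. -/
def segalMap (n : ℕ) (X : BSSet) : col n X ⟶ slash (spineSub n).toFunctor X :=
  slashMap (spineSub n).ι X

/-- A Bousfield-Segal space: a `v`-fibrant bisimplicial set whose Bousfield maps `β_n`,
`n ≥ 2`, are weak homotopy equivalences. -/
def IsBSegal (X : BSSet) : Prop :=
  VFibrant X ∧ ∀ n : ℕ, 2 ≤ n → WeakHomotopyEquivalence (bousfieldMap n X)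

/-- A Segal space: a `v`-fibrant bisimplicial set whose Segal maps `ξ_n`,
`n ≥ 2`, are weak homotopy equivalences. -/
def IsSegal (X : BSSet) : Prop :=
  VFibrant X ∧ ∀ n : ℕ, 2 ≤ n → WeakHomotopyEquivalence (segalMap n X)

/-- The map `IΔ^1 \ X → X_0` induced by the vertex `{0} : Δ[0] → IΔ^1`. -/
def completenessMap (X : BSSet) : slash (IDelta 1) X ⟶ col 0 X :=
  slashMap (iDeltaVertex 1 0) X

/-- A complete Bousfield-Segal space. -/
def IsCompleteBSegal (X : BSSet) : Prop :=
  IsBSegal X ∧ WeakHomotopyEquivalence (completenessMap X)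

/-- A bisimplicial set is homotopically constant if every map of the simplex category
induces a weak homotopy equivalence between the corresponding columns. -/
def HomotopicallyConstant (X : BSSet) : Prop :=
  ∀ ⦃a b : SimplexCategory⦄ (f : a ⟶ b),
    WeakHomotopyEquivalence (slashMap (SSet.stdSimplex.map f) X)

/-! ## Vertices, edges and the fraction operation -/

/-- The vertices of a simplicial set. -/
def vert (S : SSet.{0}) : Type := S.obj (op (SimplexCategory.mk 0))

/-- Two vertices of a simplicial set lie in the same connected component, i.e. they have
equal classes in `π₀`. -/
def hSim (S : SSet.{0}) (a b : vert S) : Prop :=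
  Relation.EqvGen (fun v w : vert S => ∃ e : S.obj (op (SimplexCategory.mk 1)),
    SimplicialObject.δ S 1 e = v ∧ SimplicialObject.δ S 0 e = w) a b

/-- The edge `0 → i` of the left cone `C n`. -/
def coneEdge (n : ℕ) (i : Fin (n + 1)) (hi : i ≠ 0) :
    (Δ[1] : SSet.{0}) ⟶ (coneSub n).toFunctor where
  app m := TypeCat.ofHom fun β => by
    refine ⟨(SSet.stdSimplex.map (SimplexCategory.mkOfLe 0 i (Fin.zero_le i))).app m β, ?_⟩
    have hne : (i : ℕ) ≠ 0 := fun h => hi (by apply Fin.ext; simpa using h)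
    refine ⟨(i : ℕ), by omega, i.is_le, fun j => ?_⟩
    have key : ∀ k : Fin 2,
        (((SimplexCategory.mkOfLe (0 : Fin (n + 1)) i (Fin.zero_le i)).toOrderHom k : Fin (n+1)) : ℕ) = 0 ∨
        (((SimplexCategory.mkOfLe (0 : Fin (n + 1)) i (Fin.zero_le i)).toOrderHom k : Fin (n+1)) : ℕ) = i := by
      intro k
      match k with
      | 0 => left; rfl
      | 1 => right; rfl
    exact key _
  naturality m m' g := by
    refine ConcreteCategory.hom_ext _ _ fun β => ?_
    apply Subtype.ext
    exact NatTrans.naturality_apply ((SSet.stdSimplex.map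
      (SimplexCategory.mkOfLe 0 i (Fin.zero_le i)))) g β

variable (X : BSSet)

/-- Vertex component of the restriction along the edge `0 → 2` of `C₂` (the "numerator"). -/
def eF (w : vert (slash (coneSub 2).toFunctor X)) : vert (col 1 X) :=
  (slashMap (coneEdge 2 2 (by decide)) X).app _ w

/-- Vertex component of the restriction along the edge `0 → 1` of `C₂` (the "denominator"). -/
def eG (w : vert (slash (coneSub 2).toFunctor X)) : vert (col 1 X) :=
  (slashMap (coneEdge 2 1 (by decide)) X).app _ w

/-- Vertex component of the face map `d_i : X_1 → X_0`. -/
def dV (i : Fin 2) (f : vert (col 1 X)) : vert (col 0 X) := (colδ i X).app _ f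

/-- Vertex component of the degeneracy `s_0 : X_0 → X_1`; `oneV X x` is `1_x`. -/
def oneV (x : vert (col 0 X)) : vert (col 1 X) := (colσ 0 X).app _ x

/-- The fraction operation determined by a section `μ₂` of the Bousfield map `β₂`:
`f/g := d₀ (μ₂ (f, g))`. -/
def fracV (μ₂ : slash (coneSub 2).toFunctor X ⟶ col 2 X)
    (w : vert (slash (coneSub 2).toFunctor X)) : vert (col 1 X) :=
  (colδ 0 X).app _ (μ₂.app _ w)

lemma dV_oneV (x : vert (col 0 X)) (i : Fin 2) : dV X i (oneV X x) = x := by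
  have h : colσ (0 : Fin 1) X ≫ colδ i X = 𝟙 (col 0 X) := by
    rw [colδ, colσ]
    refine (slashMap_comp _ _ X).symm.trans ?_
    refine (congrArg (fun t => slashMap t X) (SSet.stdSimplex.map_comp _ _).symm).trans ?_
    have : SimplexCategory.δ i ≫ SimplexCategory.σ (0 : Fin 1) = 𝟙 (SimplexCategory.mk 0) := by
      fin_cases i
      · exact SimplexCategory.δ_comp_σ_self
      · exact SimplexCategory.δ_comp_σ_succ
    rw [this]
    exact (congrArg (fun t => slashMap t X) (SSet.stdSimplex.map_id _)).trans (slashMap_id _ X)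
  exact ConcreteCategory.congr_hom (congrArg (fun (t : col 0 X ⟶ col 0 X) => t.app (op (SimplexCategory.mk 0)))
    h) x

/-- The identity morphism `1_x` as an element of the hom-space `X₁(x,x)`. -/
def idHom (x : vert (col 0 X)) :
    {f : vert (col 1 X) // dV X 1 f = x ∧ dV X 0 f = x} :=
  ⟨oneV X x, dV_oneV X x 1, dV_oneV X x 0⟩


/-! ## Cellularity, pushouts of coproducts, finite compositions of pushouts -/

/-- `f` is a pushout (cobase change) of `g`. -/
def IsPushoutOf {C : Type*} [Category C] {A B X Y : C} (g : A ⟶ B) (f : X ⟶ Y) : Prop :=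
  ∃ (u : A ⟶ X) (v : B ⟶ Y), IsPushout g u v f

/-- `f` is a pushout of a coproduct of maps belonging to the class `S`. -/
def IsPushoutOfCoproductOf (S : MorphismProperty SSet.{0}) {P Q : SSet.{0}} (f : P ⟶ Q) : Prop :=
  ∃ (ι : Type) (A B : ι → SSet.{0}) (g : ∀ i, A i ⟶ B i),
    (∀ i, S (g i)) ∧
      IsPushoutOf (Limits.Sigma.desc (fun i => g i ≫ Limits.Sigma.ι B i) : (∐ A) ⟶ (∐ B)) f

/-- `f` is cellular with respect to the class `S`: it is a (transfinite, here `ℕ`-indexed)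
composition of pushouts of coproducts of maps of `S`. -/
def IsCellularIn (S : MorphismProperty SSet.{0}) {X Y : SSet.{0}} (f : X ⟶ Y) : Prop :=
  ∃ (F : ℕ ⥤ SSet.{0}) (c : Cocone F) (_ : IsColimit c) (e₀ : F.obj 0 ≅ X) (e : c.pt ≅ Y),
    (∀ m : ℕ, IsPushoutOfCoproductOf S (F.map (homOfLE (Nat.le_succ m)))) ∧
      f = e₀.inv ≫ c.ι.app 0 ≫ e.hom

/-- `f` is a finite composition of pushouts of `g`. -/
inductive FinCompPushoutsOf {A B : SSet.{0}} (g : A ⟶ B) : ∀ {X Y : SSet.{0}}, (X ⟶ Y) → Prop where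
  | of {X Y : SSet.{0}} (f : X ⟶ Y) : IsPushoutOf g f → FinCompPushoutsOf g f
  /-- Composition with a further pushout of `g`. -/
  | comp {X Y Z : SSet.{0}} (f₁ : X ⟶ Y) (f₂ : Y ⟶ Z) :
      IsPushoutOf g f₁ → FinCompPushoutsOf g f₂ → FinCompPushoutsOf g (f₁ ≫ f₂)

/-! ## Lattice operations on subpresheaves -/

variable {C : Type*} [Category C]

/-- Intersection of two subpresheaves. -/
def subInf {F : Cᵒᵖ ⥤ Type} (G G' : Subfunctor F) : Subfunctor F where
  obj U := G.obj U ∩ G'.obj U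
  map i := fun _ hx => ⟨G.map i hx.1, G'.map i hx.2⟩

/-- Union of two subpresheaves. -/
def subSup {F : Cᵒᵖ ⥤ Type} (G G' : Subfunctor F) : Subfunctor F where
  obj U := G.obj U ∪ G'.obj U
  map i := by
    rintro x (hx | hx)
    · exact Or.inl (G.map i hx)
    · exact Or.inr (G'.map i hx)

lemma subInf_le_left {F : Cᵒᵖ ⥤ Type} (G G' : Subfunctor F) : subInf G G' ≤ G :=
  fun _ => Set.inter_subset_left

lemma le_subSup_left {F : Cᵒᵖ ⥤ Type} (G G' : Subfunctor F) : G ≤ subSup G G' :=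
  fun _ => Set.subset_union_left

/-! ## The coface `d¹` and the left cone -/

/-- The coface map `d¹ : Δ[n] → Δ[n+1]`. -/
def d1Map (n : ℕ) : (Δ[n] : SSet.{0}) ⟶ Δ[n + 1] :=
  SSet.stdSimplex.map (SimplexCategory.δ 1)

/-- The restriction of `d¹` to a map `C n → C (n+1) ∩ d¹[Δ[n]]`. -/
def coneToInter (n : ℕ) : ((coneSub n).toFunctor : SSet.{0}) ⟶
    (subInf (coneSub (n + 1)) (Subfunctor.range (d1Map n))).toFunctor where
  app m := TypeCat.ofHom fun α => by
    refine ⟨(d1Map n).app m α.1, ?_, ⟨α.1, rfl⟩⟩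
    obtain ⟨i, hi1, hin, h⟩ := α.2
    refine ⟨i + 1, by omega, by omega, fun j => ?_⟩
    have key : stdSimplex.asOrderHom ((d1Map n).app m α.1) j
        = (1 : Fin (n + 2)).succAbove (stdSimplex.asOrderHom α.1 j) := rfl
    rcases h j with h' | h'
    · left
      have h0 : stdSimplex.asOrderHom α.1 j = 0 := by
        apply Fin.ext; exact h'
      rw [key, h0, Fin.succAbove_of_castSucc_lt]
      · simp
      · simp
    · right
      rw [key, Fin.succAbove_of_le_castSucc]
      · simp [Fin.val_succ, h']
      · rw [Fin.le_def]
        simpa using by omega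
  naturality m m' g := by
    refine ConcreteCategory.hom_ext _ _ fun α => ?_
    apply Subtype.ext
    exact NatTrans.naturality_apply (d1Map n) g α.1

/-! ## Horizontally constant bisimplicial sets and closure properties -/

/-- `p₁* A`: the horizontally constant bisimplicial set with `(p₁* A)_{n,m} = A_n`. -/
def pHorizontal (A : SSet.{0}) : BSSet where
  obj nm := A.obj (op nm.unop.1)
  map f := A.map f.unop.1.op

/-- A class of maps of bisimplicial sets is stable under pullbacks. -/
def StableUnderPullbacksB (F : MorphismProperty BSSet) : Prop :=
  ∀ ⦃W X Y Z : BSSet⦄ (p' : W ⟶ X) (f' : W ⟶ Z) (f : X ⟶ Y) (p : Z ⟶ Y),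
    IsPullback p' f' f p → F f → F f'

/-- A class of maps of bisimplicial sets is stable under retracts. -/
def StableUnderRetractsB (F : MorphismProperty BSSet) : Prop :=
  ∀ ⦃X Y X' Y' : BSSet⦄ (f : X ⟶ Y) (g : X' ⟶ Y'), IsRetractOf f g → F g → F f

/-- A class of maps of bisimplicial sets is closed under sequential (inverse) limits:
limits of towers of arrows belonging to the class again belong to the class. -/
def ClosedUnderSequentialLimitsB (F : MorphismProperty BSSet) : Prop :=
  ∀ (G : ℕᵒᵖ ⥤ Arrow BSSet), (∀ n : ℕᵒᵖ, F (G.obj n).hom) →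
    ∀ (c : Cone G), IsLimit c → F c.pt.hom


/-! ## Auxiliary material for Statement 8 -/

section StatementEightAux

open CategoryTheory.Limits

/-- Pointwise pushout criterion in `Type`. -/
noncomputable def typeIsPushout {A B C D : Type} {f : A ⟶ B} {g : A ⟶ C} {h : B ⟶ D} {i : C ⟶ D}
    (comm : f ≫ h = g ≫ i)
    (hh : Function.Injective h) (hinj : Function.Injective i)
    (surj : ∀ d : D, (∃ b, h b = d) ∨ (∃ c, i c = d))
    (inter : ∀ b c, h b = i c → ∃ a, f a = b) :
    IsColimit (PushoutCocone.mk h i comm) := by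
  classical
  refine PushoutCocone.IsColimit.mk comm
    (fun s => TypeCat.ofHom fun d => if hd : ∃ b, h b = d then s.inl hd.choose
      else s.inr ((surj d).resolve_left hd).choose) ?_ ?_ ?_
  · intro s
    ext b
    have hb : ∃ b', h b' = h b := ⟨b, rfl⟩
    show (if hd : ∃ b', h b' = h b then s.inl hd.choose
      else s.inr ((surj _).resolve_left hd).choose) = s.inl b
    rw [dif_pos hb]
    exact congrArg s.inl (hh hb.choose_spec)
  · intro s
    ext c
    show (if hd : ∃ b', h b' = i c then s.inl hd.choose
      else s.inr ((surj _).resolve_left hd).choose) = s.inr c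
    by_cases hd : ∃ b', h b' = i c
    · rw [dif_pos hd]
      obtain ⟨a, ha⟩ := inter hd.choose c hd.choose_spec
      have h2 : i (g a) = i c := by
        have := ConcreteCategory.congr_hom comm a
        simp only [types_comp_apply] at this
        rw [← this, ha, hd.choose_spec]
      have hc : g a = c := hinj h2
      have := ConcreteCategory.congr_hom s.condition a
      calc s.inl hd.choose = s.inl (f a) := by rw [ha]
        _ = s.inr (g a) := ConcreteCategory.congr_hom s.condition a
        _ = s.inr c := by rw [hc]
    · rw [dif_neg hd]
      exact congrArg s.inr (hinj ((surj (i c)).resolve_left hd).choose_spec)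
  · intro s m wl wr
    ext d
    by_cases hd : ∃ b, h b = d
    · show m d = (if hd' : ∃ b, h b = d then s.inl hd'.choose
        else s.inr ((surj _).resolve_left hd').choose)
      rw [dif_pos hd]
      exact (congrArg m hd.choose_spec.symm).trans (ConcreteCategory.congr_hom wl hd.choose)
    · show m d = (if hd' : ∃ b, h b = d then s.inl hd'.choose
        else s.inr ((surj _).resolve_left hd').choose)
      rw [dif_neg hd]
      exact (congrArg m ((surj d).resolve_left hd).choose_spec.symm).trans
        (ConcreteCategory.congr_hom wr ((surj d).resolve_left hd).choose)

/-- A levelwise pushout of simplicial sets is a pushout. -/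
lemma isPushout_of_app {X Y Z W : SSet.{0}} {f : X ⟶ Y} {g : X ⟶ Z} {h : Y ⟶ W} {i : Z ⟶ W}
    (comm : f ≫ h = g ≫ i)
    (H : ∀ m, IsColimit (PushoutCocone.mk (h.app m) (i.app m)
      (by rw [← NatTrans.comp_app, comm, NatTrans.comp_app]) :
        PushoutCocone (f.app m) (g.app m))) :
    IsPushout f g h i := by
  refine IsPushout.of_isColimit (c := PushoutCocone.mk h i comm)
    (evaluationJointlyReflectsColimits _ (fun m => ?_))
  exact (isColimitMapCoconePushoutCoconeEquiv ((evaluation _ _).obj m) comm).symm (H m)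

variable {A : MorphismProperty SSet.{0}}

lemma IsSaturated.id_mem (hA : IsSaturated A) (X : SSet.{0}) : A (𝟙 X) := by
  let F : Fin 1 ⥤ SSet.{0} := (Functor.const _).obj X
  let c : Cocone F := { pt := X, ι := { app := fun _ => 𝟙 X, naturality := by intros; simp [F] } }
  have hc : IsColimit c := by
    refine ⟨fun s => s.ι.app ⊥, fun s j => ?_, fun s m w => ?_⟩
    · have : j = ⊥ := Subsingleton.elim _ _
      subst this
      exact Category.id_comp _
    · exact (Category.id_comp m).symm.trans (w ⊥)
  have := hA.transfinite (Fin 1) inferInstance inferInstance inferInstance Finite.to_wellFoundedLT F c hc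
    (fun j hj => absurd (fun b _ => le_of_eq (Subsingleton.elim b j) : IsMax j) hj)
    (fun j hj => absurd (Subsingleton.elim j ⊥) hj.ne_bot)
  simpa [c] using this

lemma IsSaturated.iso_mem (hA : IsSaturated A) {X Y : SSet.{0}} (f : X ⟶ Y) [IsIso f] :
    A f := by
  refine hA.retract f (𝟙 X) ?_ (hA.id_mem X)
  refine ⟨Arrow.homMk (u := 𝟙 X) (v := inv f) (by simp), Arrow.homMk (u := 𝟙 X) (v := f) (by simp), ?_⟩
  ext <;> simp

lemma IsSaturated.comp_mem (hA : IsSaturated A) {X Y Z : SSet.{0}} {f : X ⟶ Y} {g : Y ⟶ Z}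
    (hf : A f) (hg : A g) : A (f ≫ g) := by
  let F : Fin 3 ⥤ SSet.{0} := ComposableArrows.mk₂ f g
  have hterm : IsTerminal (⊤ : Fin 3) := isTerminalTop
  have := hA.transfinite (Fin 3) inferInstance inferInstance inferInstance Finite.to_wellFoundedLT F (coconeOfDiagramTerminal hterm F)
    (colimitOfDiagramTerminal hterm F) ?succ ?lim
  case succ =>
    intro j hj
    fin_cases j
    · exact hf
    · exact hg
    · exact absurd (fun b _ => Fin.le_last b : IsMax _) hj
  case lim =>
    intro j hj
    exfalso
    fin_cases j
    · exact hj.ne_bot rfl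
    · exact hj.isSuccPrelimit 0 (by constructor <;> decide)
    · exact hj.isSuccPrelimit 1 (by constructor <;> decide)
  exact this

end StatementEightAux

section StatementEightComb

open CategoryTheory.Limits

/-- Extensionality for simplices of the standard simplex. -/
lemma stdext {n : ℕ} {m : SimplexCategoryᵒᵖ} {α β : (Δ[n] : SSet.{0}).obj m}
    (h : ∀ j, stdSimplex.asOrderHom α j = stdSimplex.asOrderHom β j) : α = β := by
  apply (stdSimplex.objEquiv).injective
  exact SimplexCategory.Hom.ext _ _ (OrderHom.ext _ _ (funext h))

/-- The monotone map `Fin 3 →o Fin (n+1)` sending `0, 1, 2` to `0, i+1, i+2`. -/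
def triVal (n i : ℕ) (hi : i + 2 ≤ n) : Fin 3 →o Fin (n + 1) where
  toFun j := ⟨if (j : ℕ) = 0 then 0 else i + j, by have := j.is_le; split <;> omega⟩
  monotone' := by
    intro a b hab
    have hab' : (a : ℕ) ≤ b := hab
    simp only [Fin.mk_le_mk]
    split <;> split <;> omega

/-- The `2`-simplex `{0, i+1, i+2}` of `Δ[n]`. -/
def triMap (n i : ℕ) (hi : i + 2 ≤ n) : (Δ[2] : SSet.{0}) ⟶ Δ[n] :=
  SSet.stdSimplex.map (SimplexCategory.mkHom (triVal n i hi))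

lemma triMap_val (n i : ℕ) (hi : i + 2 ≤ n) {m} (β : (Δ[2] : SSet.{0}).obj m) (j) :
    (stdSimplex.asOrderHom ((triMap n i hi).app m β) j : ℕ) =
      if (stdSimplex.asOrderHom β j : ℕ) = 0 then 0 else i + (stdSimplex.asOrderHom β j : ℕ) := rfl

/-- The union of `B` with the triangles `{0, k, k+1}` for `1 ≤ k ≤ i`. -/
def stepSub (n : ℕ) (B : Subfunctor Δ[n]) (i : ℕ) : Subfunctor Δ[n] where
  obj m := {α | α ∈ B.obj m ∨ ∃ k, k ≤ i ∧ 1 ≤ k ∧ k + 1 ≤ n ∧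
    ∀ j, (stdSimplex.asOrderHom α j : ℕ) = 0 ∨ (stdSimplex.asOrderHom α j : ℕ) = k ∨ (stdSimplex.asOrderHom α j : ℕ) = k + 1}
  map := by
    rintro m m' g α (h | ⟨k, hk, h1, h2, h3⟩)
    · exact Or.inl (B.map g h)
    · exact Or.inr ⟨k, hk, h1, h2, fun j => h3 _⟩

lemma le_stepSub (n : ℕ) (B : Subfunctor Δ[n]) (i : ℕ) : B ≤ stepSub n B i :=
  fun _ _ h => Or.inl h

lemma stepSub_mono (n : ℕ) (B : Subfunctor Δ[n]) {i i' : ℕ} (h : i ≤ i') :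
    stepSub n B i ≤ stepSub n B i' := by
  rintro m α (h' | ⟨k, hk, rest⟩)
  · exact Or.inl h'
  · exact Or.inr ⟨k, hk.trans h, rest⟩

lemma isIso_homOfLe_of_le {C : Type*} [Category C] {F : Cᵒᵖ ⥤ Type w}
    {G G' : Subfunctor F} (h : G ≤ G') (h' : G' ≤ G) :
    IsIso (Subfunctor.homOfLe h) :=
  ⟨Subfunctor.homOfLe h',
    NatTrans.ext (funext fun U => ConcreteCategory.hom_ext _ _ fun x => Subtype.ext rfl),
    NatTrans.ext (funext fun U => ConcreteCategory.hom_ext _ _ fun x => Subtype.ext rfl)⟩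

lemma step_mem_succ (n i : ℕ) (hi : i + 2 ≤ n) (B : Subfunctor Δ[n]) {m}
    (β : (Δ[2] : SSet.{0}).obj m) :
    (triMap n i hi).app m β ∈ (stepSub n B (i + 1)).obj m := by
  refine Or.inr ⟨i + 1, le_refl _, by omega, by omega, fun j => ?_⟩
  have hb := (stdSimplex.asOrderHom β j).is_le
  rw [triMap_val]
  split <;> omega

variable {A : MorphismProperty SSet.{0}}

lemma A_stepSub_succ (hA : IsSaturated A) (n i : ℕ) (hi : i + 2 ≤ n)
    (B : Subfunctor Δ[n]) (S : Subfunctor Δ[2]) (hS : A S.ι)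
    (h1 : ∀ m (β : (Δ[2] : SSet.{0}).obj m), β ∈ S.obj m →
      (triMap n i hi).app m β ∈ (stepSub n B i).obj m)
    (h2 : ∀ m (β : (Δ[2] : SSet.{0}).obj m),
      (triMap n i hi).app m β ∈ (stepSub n B i).obj m → β ∈ S.obj m) :
    A (Subfunctor.homOfLe (stepSub_mono n B (Nat.le_succ i))) := by
  refine hA.pushout S.ι
    (Subfunctor.lift (G := stepSub n B i) (S.ι ≫ triMap n i hi) (by rintro m _ ⟨x, rfl⟩; exact h1 m x.1 x.2))
    (Subfunctor.lift (G := stepSub n B (i + 1)) (triMap n i hi) (by rintro m _ ⟨x, rfl⟩; exact step_mem_succ n i hi B x))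
    (Subfunctor.homOfLe (stepSub_mono n B (Nat.le_succ i))) ?_ hS
  refine isPushout_of_app rfl (fun m => typeIsPushout _ ?_ ?_ ?_ ?_)
  · -- injectivity of the right-hand vertical map
    intro b b' hbb
    have ht : (triMap n i hi).app m b = (triMap n i hi).app m b' :=
      congrArg Subtype.val hbb
    apply stdext
    intro j
    have hv : (if (stdSimplex.asOrderHom b j : ℕ) = 0 then 0 else i + (stdSimplex.asOrderHom b j : ℕ))
        = (if (stdSimplex.asOrderHom b' j : ℕ) = 0 then 0 else i + (stdSimplex.asOrderHom b' j : ℕ)) := by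
      rw [← triMap_val n i hi b j, ← triMap_val n i hi b' j, ht]
    have hb1 := (stdSimplex.asOrderHom b j).is_le
    have hb2 := (stdSimplex.asOrderHom b' j).is_le
    apply Fin.ext
    split at hv <;> split at hv <;> omega
  · intro c c' h
    apply Subtype.ext
    have h' := congrArg Subtype.val h
    exact h'
  · -- joint surjectivity
    rintro ⟨α, hα | ⟨k, hk, h1k, h2k, h3k⟩⟩
    · exact Or.inr ⟨⟨α, Or.inl hα⟩, rfl⟩
    · by_cases hk' : k ≤ i
      · exact Or.inr ⟨⟨α, Or.inr ⟨k, hk', h1k, h2k, h3k⟩⟩, rfl⟩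
      · have hk1 : k = i + 1 := by omega
        subst hk1
        left
        have hmono : Monotone (fun j => (⟨if (stdSimplex.asOrderHom α j : ℕ) = 0 then 0
            else if (stdSimplex.asOrderHom α j : ℕ) = i + 1 then 1 else 2, by
              split_ifs <;> omega⟩ : Fin 3)) := by
          intro a b hab
          have hab' : (stdSimplex.asOrderHom α a : ℕ) ≤ (stdSimplex.asOrderHom α b : ℕ) :=
            (stdSimplex.asOrderHom α).monotone hab
          have ha := h3k a
          have hb := h3k b
          simp only [Fin.mk_le_mk]
          split_ifs <;> omega
        refine ⟨stdSimplex.objMk ⟨_, hmono⟩, ?_⟩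
        apply Subtype.ext
        have key : (triMap n i hi).app m (stdSimplex.objMk (n := ⦋2⦌) ⟨_, hmono⟩) = α := by
          apply stdext
          intro j
          apply Fin.ext
          have hj := h3k j
          show (if (if (stdSimplex.asOrderHom α j : ℕ) = 0 then 0
              else if (stdSimplex.asOrderHom α j : ℕ) = i + 1 then 1 else 2) = 0 then 0
            else i + (if (stdSimplex.asOrderHom α j : ℕ) = 0 then 0
              else if (stdSimplex.asOrderHom α j : ℕ) = i + 1 then 1 else 2)) = (stdSimplex.asOrderHom α j : ℕ)
          split_ifs <;> first | contradiction | omega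
        exact key
  · -- intersection condition
    intro b c hbc
    have hmem : (triMap n i hi).app m b ∈ (stepSub n B i).obj m := by
      have h' : (triMap n i hi).app m b = c.1 := congrArg Subtype.val hbc
      rw [h']
      exact c.2
    exact ⟨⟨b, h2 m b hmem⟩, rfl⟩

end StatementEightComb

section StatementEightFinal

open CategoryTheory.Limits

variable {A : MorphismProperty SSet.{0}}

lemma A_stepSub (hA : IsSaturated A) (n : ℕ)
    (B : Subfunctor Δ[n]) (S : Subfunctor Δ[2]) (hS : A S.ι)
    (h1 : ∀ (i : ℕ) (hi : i + 2 ≤ n), ∀ m (β : (Δ[2] : SSet.{0}).obj m), β ∈ S.obj m →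
      (triMap n i hi).app m β ∈ (stepSub n B i).obj m)
    (h2 : ∀ (i : ℕ) (hi : i + 2 ≤ n), ∀ m (β : (Δ[2] : SSet.{0}).obj m),
      (triMap n i hi).app m β ∈ (stepSub n B i).obj m → β ∈ S.obj m) :
    ∀ i : ℕ, i + 1 ≤ n → A (Subfunctor.homOfLe (le_stepSub n B i)) := by
  intro i
  induction i with
  | zero =>
    intro _
    have h' : stepSub n B 0 ≤ B := by
      rintro m α (h | ⟨k, hk, h1k, _⟩)
      · exact h
      · omega
    have := isIso_homOfLe_of_le (le_stepSub n B 0) h'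
    exact hA.iso_mem _
  | succ i ih =>
    intro hi
    have hi' : i + 2 ≤ n := hi
    have hstep := A_stepSub_succ hA n i hi' B S hS (h1 i hi') (h2 i hi')
    have := hA.comp_mem (ih (by omega)) hstep
    exact this

lemma cone_h1 (n : ℕ) : ∀ (i : ℕ) (hi : i + 2 ≤ n), ∀ m (β : (Δ[2] : SSet.{0}).obj m),
    β ∈ (coneSub 2).obj m → (triMap n i hi).app m β ∈ (stepSub n (coneSub n) i).obj m := by
  rintro i hi m β ⟨c, hc1, hc2, hv⟩
  refine Or.inl ⟨i + c, by omega, by omega, fun j => ?_⟩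
  have hj := hv j
  have hb := (stdSimplex.asOrderHom β j).is_le
  rw [triMap_val]
  split_ifs <;> first | contradiction | omega

lemma cone_h2 (n : ℕ) : ∀ (i : ℕ) (hi : i + 2 ≤ n), ∀ m (β : (Δ[2] : SSet.{0}).obj m),
    (triMap n i hi).app m β ∈ (stepSub n (coneSub n) i).obj m → β ∈ (coneSub 2).obj m := by
  rintro i hi m β (⟨c, hc1, hc2, hv⟩ | ⟨k, hk, hk1, hk2, hv⟩)
  · by_cases hex : ∃ j, (stdSimplex.asOrderHom β j : ℕ) = 1
    · refine ⟨1, by omega, by omega, fun j => ?_⟩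
      obtain ⟨j₀, hj₀⟩ := hex
      have h0 := hv j₀
      have hj := hv j
      rw [triMap_val n i hi β j₀, hj₀, if_neg (by omega : ¬(1:ℕ) = 0)] at h0
      rw [triMap_val n i hi β j] at hj
      have hb := (stdSimplex.asOrderHom β j).is_le
      split_ifs at hj <;> omega
    · refine ⟨2, by omega, by omega, fun j => ?_⟩
      have h1 : ¬ (stdSimplex.asOrderHom β j : ℕ) = 1 := fun h => hex ⟨j, h⟩
      have hb := (stdSimplex.asOrderHom β j).is_le
      omega
  · refine ⟨1, by omega, by omega, fun j => ?_⟩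
    have hj := hv j
    rw [triMap_val n i hi β j] at hj
    have hb := (stdSimplex.asOrderHom β j).is_le
    split_ifs at hj <;> first | contradiction | omega

lemma spine_h1 (n : ℕ) : ∀ (i : ℕ) (hi : i + 2 ≤ n), ∀ m (β : (Δ[2] : SSet.{0}).obj m),
    β ∈ (spineSub 2).obj m → (triMap n i hi).app m β ∈ (stepSub n (spineSub n) i).obj m := by
  rintro i hi m β ⟨s, hs, hv⟩
  rcases Nat.lt_or_ge s 1 with h0 | h1
  · have hs0 : s = 0 := by omega
    subst hs0
    rcases Nat.eq_zero_or_pos i with hi0 | hipos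
    · subst hi0
      refine Or.inl ⟨0, by omega, fun j => ?_⟩
      have hj := hv j
      rw [triMap_val]
      split_ifs <;> first | contradiction | omega
    · refine Or.inr ⟨i, le_refl _, by omega, by omega, fun j => ?_⟩
      have hj := hv j
      rw [triMap_val]
      split_ifs <;> first | contradiction | omega
  · have hs1 : s = 1 := by omega
    subst hs1
    refine Or.inl ⟨i + 1, by omega, fun j => ?_⟩
    have hj := hv j
    rw [triMap_val]
    split_ifs <;> first | contradiction | omega

lemma spine_h2 (n : ℕ) : ∀ (i : ℕ) (hi : i + 2 ≤ n), ∀ m (β : (Δ[2] : SSet.{0}).obj m),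
    (triMap n i hi).app m β ∈ (stepSub n (spineSub n) i).obj m → β ∈ (spineSub 2).obj m := by
  rintro i hi m β (⟨s, hs, hv⟩ | ⟨k, hk, hk1, hk2, hv⟩)
  · by_cases hex : ∃ j, (stdSimplex.asOrderHom β j : ℕ) = 0
    · refine ⟨0, by omega, fun j => ?_⟩
      obtain ⟨j₀, hj₀⟩ := hex
      have h0 := hv j₀
      have hj := hv j
      rw [triMap_val n i hi β j₀, hj₀, if_pos rfl] at h0
      rw [triMap_val n i hi β j] at hj
      have hb := (stdSimplex.asOrderHom β j).is_le
      split_ifs at hj <;> omega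
    · refine ⟨1, by omega, fun j => ?_⟩
      have h1 : ¬ (stdSimplex.asOrderHom β j : ℕ) = 0 := fun h => hex ⟨j, h⟩
      have hb := (stdSimplex.asOrderHom β j).is_le
      omega
  · refine ⟨0, by omega, fun j => ?_⟩
    have hj := hv j
    rw [triMap_val n i hi β j] at hj
    have hb := (stdSimplex.asOrderHom β j).is_le
    split_ifs at hj <;> first | contradiction | omega

lemma coneSub_le_step (n : ℕ) (hn : 2 ≤ n) (B : Subfunctor Δ[n]) :
    coneSub n ≤ stepSub n B (n - 1) := by
  rintro m α ⟨c, hc1, hc2, hv⟩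
  by_cases hc : c ≤ n - 1
  · exact Or.inr ⟨c, hc, by omega, by omega, fun j => by have := hv j; omega⟩
  · exact Or.inr ⟨n - 1, le_refl _, by omega, by omega, fun j => by have := hv j; omega⟩

lemma spineSub_le_step (n : ℕ) (hn : 2 ≤ n) (B : Subfunctor Δ[n]) :
    spineSub n ≤ stepSub n B (n - 1) := by
  rintro m α ⟨s, hs, hv⟩
  rcases Nat.eq_zero_or_pos s with h0 | h1
  · subst h0
    exact Or.inr ⟨1, by omega, by omega, by omega, fun j => by have := hv j; omega⟩
  · exact Or.inr ⟨s, by omega, by omega, by omega, fun j => by have := hv j; omega⟩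

lemma step_spine_le_step_cone (n : ℕ) (hn : 2 ≤ n) :
    stepSub n (spineSub n) (n - 1) ≤ stepSub n (coneSub n) (n - 1) := by
  rintro m α (h | htri)
  · exact spineSub_le_step n hn (coneSub n) m h
  · exact Or.inr htri

lemma step_cone_le_step_spine (n : ℕ) (hn : 2 ≤ n) :
    stepSub n (coneSub n) (n - 1) ≤ stepSub n (spineSub n) (n - 1) := by
  rintro m α (h | htri)
  · exact coneSub_le_step n hn (spineSub n) m h
  · exact Or.inr htri

end StatementEightFinal

/-- Let `A` be a saturated class of morphisms of simplicial sets satisfying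
3-for-2 for monomorphisms. If `A` contains all spine inclusions `sp_n : Sp_n → Δ[n]`, `n ≥ 2`,
and contains the left cone inclusion `c₂ : C₂ → Δ[2]`, then `A` contains all left cone
inclusions `c_n : C_n → Δ[n]`, `n ≥ 2`. -/
theorem spines_and_c2_to_cones (A : MorphismProperty SSet.{0})
    (hA : IsSaturated A) (h32 : ThreeForTwo A)
    (hsp : ∀ n : ℕ, 2 ≤ n → A ((spineSub n).ι)) (hc2 : A ((coneSub 2).ι)) :
    ∀ n : ℕ, 2 ≤ n → A ((coneSub n).ι) := by
  intro n hn
  -- The spine inclusion into the union of triangles is in `A`.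
  have hsp_step : A (Subfunctor.homOfLe (le_stepSub n (spineSub n) (n - 1))) :=
    A_stepSub hA n (spineSub n) (spineSub 2) (hsp 2 le_rfl) (spine_h1 n) (spine_h2 n)
      (n - 1) (by omega)
  have hcone_step : A (Subfunctor.homOfLe (le_stepSub n (coneSub n) (n - 1))) :=
    A_stepSub hA n (coneSub n) (coneSub 2) hc2 (cone_h1 n) (cone_h2 n) (n - 1) (by omega)
  -- Transfer the spine inclusion to the cone-based union via the isomorphism of the two unions.
  have hiso : IsIso (Subfunctor.homOfLe (step_spine_le_step_cone n hn)) :=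
    isIso_homOfLe_of_le _ (step_cone_le_step_spine n hn)
  have hspineU : A (Subfunctor.homOfLe
      ((le_stepSub n (spineSub n) (n - 1)).trans (step_spine_le_step_cone n hn))) := by
    have := hA.comp_mem hsp_step
      (hA.iso_mem (Subfunctor.homOfLe (step_spine_le_step_cone n hn)))
    exact this
  -- Right cancellation gives that the union of triangles includes into `Δ[n]` within `A`.
  have hUι : A (stepSub n (coneSub n) (n - 1)).ι := by
    have hmono1 : Mono (Subfunctor.homOfLe
        ((le_stepSub n (spineSub n) (n - 1)).trans (step_spine_le_step_cone n hn))) :=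
      inferInstance
    have hmono2 : Mono (stepSub n (coneSub n) (n - 1)).ι := inferInstance
    refine h32.1 (Subfunctor.homOfLe
      ((le_stepSub n (spineSub n) (n - 1)).trans (step_spine_le_step_cone n hn)))
      (stepSub n (coneSub n) (n - 1)).ι hmono1 hmono2 ?_ hspineU
    rw [Subfunctor.homOfLe_ι]
    exact hsp n hn
  -- Compose to conclude.
  have := hA.comp_mem hcone_step hUι
  rw [Subfunctor.homOfLe_ι] at this
  exact this


end BousfieldPaper
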